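/- Let C ⊆ F_{q^m}^n be an MRD code of dimension k over F_{q^m} with 1 ≤ k < n. Then C has a generator matrix in systematic form G = [I_k | X], where I_k is the k×k identity matrix and X ∈ F_{q^m}^{k×(n−k)}; moreover, every entry of X lies in F_{q^m} ∖ F_q. -/

import Mathlib

open Matrix

/-- The rank over the subfield `Fq` of a vector with entries in `K`:
the `Fq`-dimension of the `Fq`-span of its coordinates. -/
noncomputable def rankQ (Fq : Type) {K : Type} [Field Fq] [Field K] [Algebra Fq K] {n : ℕ}
    (v : Fin n → K) : ℕ :=
  Module.finrank Fq (Submodule.span Fq (Set.range v))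

/-- The minimum rank distance of a linear rank-metric code `C ⊆ K^n`. -/
noncomputable def minRankDist (Fq : Type) {K : Type} [Field Fq] [Field K] [Algebra Fq K] {n : ℕ}
    (C : Submodule K (Fin n → K)) : ℕ :=
  sInf (rankQ Fq '' {c : Fin n → K | c ∈ C ∧ c ≠ 0})

/-- A linear code `C ⊆ K^n` of dimension `k` over `K` is MRD if its minimum
rank distance equals `n - k + 1`. -/
def IsMRD (Fq : Type) {K : Type} [Field Fq] [Field K] [Algebra Fq K] {n : ℕ}
    (C : Submodule K (Fin n → K)) (k : ℕ) : Prop :=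
  Module.finrank K C = k ∧ minRankDist Fq C = n - k + 1

/-- `G` is a generator matrix of `C`: its rows form a `K`-basis of `C`. -/
def IsGenMat {K : Type} [Field K] {k n : ℕ} (C : Submodule K (Fin n → K))
    (G : Matrix (Fin k) (Fin n) K) : Prop :=
  LinearIndependent K (fun i => G i) ∧ Submodule.span K (Set.range fun i => G i) = C

/-- Aux: if every coordinate of `v` lies in the span of the values of `w : Fin N → K`,
then the rank of `v` over `Fq` is at most `N`. -/
lemma rankQ_le_of_coords_mem_span {Fq K : Type} [Field Fq] [Field K] [Algebra Fq K]
    {n N : ℕ} (v : Fin n → K) (w : Fin N → K)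
    (h : ∀ j, v j ∈ Submodule.span Fq (Set.range w)) : rankQ Fq v ≤ N := by
  classical
  have h1 : Submodule.span Fq (Set.range v) ≤ Submodule.span Fq (Set.range w) :=
    Submodule.span_le.mpr (Set.range_subset_iff.mpr h)
  have h2 : Module.finrank Fq (Submodule.span Fq (Set.range w)) ≤ N := by
    exact (finrank_range_le_card w).trans (by simp)
  have hfd : FiniteDimensional Fq (Submodule.span Fq (Set.range w)) :=
    FiniteDimensional.span_of_finite Fq (Set.finite_range w)
  exact (Submodule.finrank_mono h1).trans h2

/-- every MRD code of dimension `1 ≤ k < n` has a generator matrix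
in systematic form `[I_k | X]` where all entries of `X` lie in `F_{q^m} \ F_q`. -/
theorem stmt14 {q m n k : ℕ} (Fq K : Type) [Field Fq] [Fintype Fq] [Field K] [Fintype K]
    [Algebra Fq K] (hq : Fintype.card Fq = q) (hK : Fintype.card K = q ^ m)
    (hk : 1 ≤ k) (hkn : k < n)
    (C : Submodule K (Fin n → K)) (hMRD : IsMRD Fq C k) :
    ∃ G : Matrix (Fin k) (Fin n) K, IsGenMat C G ∧
      (∀ i j : Fin k, G i (Fin.castLE hkn.le j) = if i = j then 1 else 0) ∧
      (∀ (i : Fin k) (j : Fin n), k ≤ (j : ℕ) → G i j ∉ (algebraMap Fq K).range) := by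
  classical
  obtain ⟨hdim, hdist⟩ := hMRD
  have hlow : ∀ c ∈ C, c ≠ 0 → n - k + 1 ≤ rankQ Fq c := by
    intro c hc hne
    rw [← hdist]
    exact Nat.sInf_le ⟨c, ⟨hc, hne⟩, rfl⟩
  set π : (Fin n → K) →ₗ[K] (Fin k → K) := LinearMap.funLeft K K (Fin.castLE hkn.le) with hπ
  set p : C →ₗ[K] (Fin k → K) := π.comp C.subtype with hp
  have hp_apply : ∀ (c : C) (j : Fin k), p c = fun j => (c : Fin n → K) (Fin.castLE hkn.le j) :=
    fun c j => rfl
  have hp_inj : Function.Injective p := by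
    rw [← LinearMap.ker_eq_bot, Submodule.eq_bot_iff]
    rintro ⟨c, hc⟩ hker
    have hzero : ∀ j : Fin k, c (Fin.castLE hkn.le j) = 0 := by
      intro j
      have := congrFun (show p ⟨c, hc⟩ = 0 from hker) j
      simpa [hp, hπ, LinearMap.funLeft] using this
    have hc0 : c = 0 := by
      by_contra hne
      have h1 := hlow c hc hne
      set w : Fin (n - k) → K := fun t => c ⟨k + (t : ℕ), by omega⟩ with hw
      have h2 : rankQ Fq c ≤ n - k := by
        refine rankQ_le_of_coords_mem_span c w ?_
        intro j
        rcases lt_or_ge (j : ℕ) k with hj | hj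
        · have : c j = 0 := by
            have := hzero ⟨(j : ℕ), hj⟩
            convert this using 2
            exact Fin.ext (by simp)
          rw [this]; exact Submodule.zero_mem _
        · have : c j = w ⟨(j : ℕ) - k, by omega⟩ := by
            simp only [hw]
            congr 1
            exact Fin.ext (by first | (simp; omega) | simp | omega)
          rw [this]
          exact Submodule.subset_span ⟨_, rfl⟩
      omega
    exact Subtype.ext hc0
  have hfr : Module.finrank K C = Module.finrank K (Fin k → K) := by
    rw [hdim, Module.finrank_pi, Fintype.card_fin]
  have hp_surj : Function.Surjective p :=
    (LinearMap.injective_iff_surjective_of_finrank_eq_finrank hfr).mp hp_inj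
  set e : C ≃ₗ[K] (Fin k → K) := LinearEquiv.ofBijective p ⟨hp_inj, hp_surj⟩ with he
  set b : Module.Basis (Fin k) K C := (Pi.basisFun K (Fin k)).map e.symm with hb
  set G : Matrix (Fin k) (Fin n) K := fun i => (b i : Fin n → K) with hG
  have hpb : ∀ i : Fin k, p (b i) = Pi.single i 1 := by
    intro i
    have : p (b i) = e (b i) := rfl
    rw [this, hb]
    simp [Module.Basis.map_apply]
  have hGcast : ∀ i j : Fin k, G i (Fin.castLE hkn.le j) = if i = j then 1 else 0 := by
    intro i j
    have h2 : G i (Fin.castLE hkn.le j) = (Pi.single i (1 : K) : Fin k → K) j :=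
      congrFun (hpb i) j
    rw [h2, Pi.single_apply]
    simp [eq_comm]
  refine ⟨G, ⟨?_, ?_⟩, hGcast, ?_⟩
  · have : (fun i => G i) = C.subtype ∘ b := rfl
    rw [this]
    exact b.linearIndependent.map' C.subtype C.ker_subtype
  · have : Set.range (fun i => G i) = C.subtype '' Set.range b := by
      rw [← Set.range_comp]; rfl
    rw [this, Submodule.span_image, b.span_eq, Submodule.map_subtype_top]
  · rintro i j0 hj0 ⟨a, ha⟩
    have hmem : G i ∈ C := (b i).2
    have hne : G i ≠ 0 := by
      intro h0
      have := hGcast i i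
      rw [h0] at this
      simp at this
    have h1 := hlow (G i) hmem hne
    set w : Fin (n - k) → K := fun t =>
      if (⟨k + (t : ℕ), by omega⟩ : Fin n) = j0 then 1 else G i ⟨k + (t : ℕ), by omega⟩ with hw
    have hone : (1 : K) ∈ Submodule.span Fq (Set.range w) := by
      refine Submodule.subset_span ⟨⟨(j0 : ℕ) - k, by omega⟩, ?_⟩
      simp only [hw]
      rw [if_pos (Fin.ext (by first | (simp; omega) | simp | omega))]
    have h2 : rankQ Fq (G i) ≤ n - k := by
      refine rankQ_le_of_coords_mem_span (G i) w ?_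
      intro j
      rcases lt_or_ge (j : ℕ) k with hj | hj
      · have : G i j = if i = ⟨(j : ℕ), hj⟩ then 1 else 0 := by
          have := hGcast i ⟨(j : ℕ), hj⟩
          convert this using 2
          exact Fin.ext (by simp)
        rw [this]
        split
        · exact hone
        · exact Submodule.zero_mem _
      · rcases eq_or_ne j j0 with rfl | hjj
        · have : G i j = a • (1 : K) := by
            rw [← ha, Algebra.smul_def, mul_one]
          rw [this]
          exact Submodule.smul_mem _ a hone
        · have : G i j = w ⟨(j : ℕ) - k, by omega⟩ := by
            simp only [hw]
            rw [if_neg]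
            · congr 1; exact Fin.ext (by first | (simp; omega) | simp | omega)
            · intro h
              apply hjj
              rw [show j = (⟨k + ((j : ℕ) - k), by omega⟩ : Fin n) from
                Fin.ext (by first | (simp; omega) | simp | omega)]
              exact h
          rw [this]
          exact Submodule.subset_span ⟨_, rfl⟩
    omega
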